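/- Let X be a real-valued random variable with E e^{tX} < ∞ for some t > 0, and suppose x_max := sup supp(X) < ∞ and p_max := P(X = x_max) > 0, and let L := L_X. Then: L^{*←}(u) = x_max for every u ∈ (−ln p_max, ∞); L^{*←}(−ln p_max) = x_max if p_max < 1; and L^{*←}(−ln p_max) = L^{*←}(0) = −∞ if p_max = 1. -/

import Mathlib

open Set MeasureTheory Filter

/-- Legendre–Fenchel transform `L^*(x) = sup_{t>0} [t·x − L(t)]`, with values in `[-∞,∞]`. -/
noncomputable def LF (L : ℝ → EReal) (x : ℝ) : EReal :=
  ⨆ (t : ℝ) (_ : 0 < t), ((t * x : ℝ) : EReal) - L t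

/-- Smallest generalized inverse `L^{*←}(u) = inf {x ∈ ℝ : L^*(x) ≥ u}`, with `inf ∅ = ∞`. -/
noncomputable def geInv (L : ℝ → EReal) (u : ℝ) : EReal :=
  sInf ((fun x : ℝ => (x : EReal)) '' {x : ℝ | (u : EReal) ≤ LF L x})

/-- Largest generalized inverse `L^{*⇐}(u) = inf {x ∈ ℝ : L^*(x) > u}`, with `inf ∅ = ∞`. -/
noncomputable def tgeInv (L : ℝ → EReal) (u : ℝ) : EReal :=
  sInf ((fun x : ℝ => (x : EReal)) '' {x : ℝ | (u : EReal) < LF L x})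

/-- Hölder convolution `(L_1 ⊞ ⋯ ⊞ L_n)(t) = inf { Σ_j α_j L_j(t/α_j) : α_j > 0, Σ_j α_j = 1 }`,
with `inf ∅ = ∞`. -/
noncomputable def hconv (n : ℕ) (L : Fin n → ℝ → EReal) (t : ℝ) : EReal :=
  ⨅ (α : Fin n → ℝ) (_ : (∀ j, 0 < α j) ∧ ∑ j, α j = 1),
    ∑ j, (α j : EReal) * L j (t / α j)

/-- Cramér–Chernoff function `L_X(t) = ln E e^{tX}`, with values in `(-∞,∞]`. -/
noncomputable def cramer {Ω : Type*} [MeasurableSpace Ω] (μ : Measure Ω) (X : Ω → ℝ)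
    (t : ℝ) : EReal :=
  ENNReal.log (∫⁻ ω, ENNReal.ofReal (Real.exp (t * X ω)) ∂μ)

section Aux
set_option linter.unusedSectionVars false
variable {Ω' : Type*}

variable {Ω : Type*} [MeasurableSpace Ω] {μ : Measure Ω} [IsProbabilityMeasure μ]
  {X : Ω → ℝ} {c : ℝ}

lemma measE (hX : Measurable X) (t : ℝ) :
    Measurable fun ω => ENNReal.ofReal (Real.exp (t * X ω)) :=
  ENNReal.measurable_ofReal.comp (Real.measurable_exp.comp (hX.const_mul t))

lemma I_le (hle : ∀ᵐ ω ∂μ, X ω ≤ c) {t : ℝ} (ht : 0 ≤ t) :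
    ∫⁻ ω, ENNReal.ofReal (Real.exp (t * X ω)) ∂μ ≤ ENNReal.ofReal (Real.exp (t * c)) := by
  calc ∫⁻ ω, ENNReal.ofReal (Real.exp (t * X ω)) ∂μ
      ≤ ∫⁻ _, ENNReal.ofReal (Real.exp (t * c)) ∂μ := by
        refine lintegral_mono_ae (hle.mono fun ω hω => ?_)
        exact ENNReal.ofReal_le_ofReal (Real.exp_le_exp.2 (mul_le_mul_of_nonneg_left hω ht))
    _ = ENNReal.ofReal (Real.exp (t * c)) := by simp

lemma I_geM (hX : Measurable X) (M : ℝ) {t : ℝ} (ht : 0 ≤ t) :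
    ENNReal.ofReal (Real.exp (t * M)) * μ {ω | M ≤ X ω} ≤
      ∫⁻ ω, ENNReal.ofReal (Real.exp (t * X ω)) ∂μ := by
  have hs : MeasurableSet {ω | M ≤ X ω} := hX measurableSet_Ici
  calc ENNReal.ofReal (Real.exp (t * M)) * μ {ω | M ≤ X ω}
      = ∫⁻ _ω in {ω | M ≤ X ω}, ENNReal.ofReal (Real.exp (t * M)) ∂μ := by
        rw [setLIntegral_const]
    _ ≤ ∫⁻ ω in {ω | M ≤ X ω}, ENNReal.ofReal (Real.exp (t * X ω)) ∂μ := by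
        refine setLIntegral_mono (measE hX t) fun ω hω => ?_
        exact ENNReal.ofReal_le_ofReal (Real.exp_le_exp.2 (mul_le_mul_of_nonneg_left hω ht))
    _ ≤ ∫⁻ ω, ENNReal.ofReal (Real.exp (t * X ω)) ∂μ := setLIntegral_le_lintegral _ _

lemma I_gec (hX : Measurable X) (t : ℝ) :
    ENNReal.ofReal (Real.exp (t * c)) * μ {ω | X ω = c} ≤
      ∫⁻ ω, ENNReal.ofReal (Real.exp (t * X ω)) ∂μ := by
  have hs : MeasurableSet {ω | X ω = c} := hX (measurableSet_singleton c)
  calc ENNReal.ofReal (Real.exp (t * c)) * μ {ω | X ω = c}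
      = ∫⁻ _ω in {ω | X ω = c}, ENNReal.ofReal (Real.exp (t * c)) ∂μ := by
        rw [setLIntegral_const]
    _ = ∫⁻ ω in {ω | X ω = c}, ENNReal.ofReal (Real.exp (t * X ω)) ∂μ := by
        refine (setLIntegral_congr_fun hs (fun ω hω => ?_)).symm
        simp [Set.mem_setOf_eq.mp hω]
    _ ≤ ∫⁻ ω, ENNReal.ofReal (Real.exp (t * X ω)) ∂μ := setLIntegral_le_lintegral _ _



variable {Ω : Type*} [MeasurableSpace Ω] {μ : Measure Ω} [IsProbabilityMeasure μ]
  {X : Ω → ℝ} {c : ℝ}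

lemma log_aux {a : ℝ} {ν I : ENNReal} (hν0 : ν ≠ 0) (hν1 : ν ≤ 1)
    (h : ENNReal.ofReal (Real.exp a) * ν ≤ I) :
    ((a + Real.log ν.toReal : ℝ) : EReal) ≤ ENNReal.log I := by
  have hνt : ν ≠ ⊤ := (hν1.trans_lt ENNReal.one_lt_top).ne
  have h1 : ENNReal.log (ENNReal.ofReal (Real.exp a) * ν) ≤ ENNReal.log I :=
    ENNReal.log_monotone h
  rw [ENNReal.log_mul_add, ENNReal.log_ofReal_of_pos (Real.exp_pos a),
    ENNReal.log_pos_real' (ENNReal.toReal_pos hν0 hνt), Real.log_exp] at h1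
  rwa [EReal.coe_add]

lemma cr_le (hle : ∀ᵐ ω ∂μ, X ω ≤ c) {t : ℝ} (ht : 0 ≤ t) :
    cramer μ X t ≤ ((t * c : ℝ) : EReal) := by
  have := ENNReal.log_monotone (I_le hle ht)
  rwa [ENNReal.log_ofReal_of_pos (Real.exp_pos _), Real.log_exp] at this

lemma lf_le_of_le (hX : Measurable X) (hp : μ {ω | X ω = c} ≠ 0) {x : ℝ} (hx : x ≤ c) :
    LF (cramer μ X) x ≤ ((-Real.log (μ {ω | X ω = c}).toReal : ℝ) : EReal) := by
  set q := (μ {ω | X ω = c}).toReal with hq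
  refine iSup₂_le fun t ht => ?_
  have h1 : ((t * x + Real.log q : ℝ) : EReal) ≤ cramer μ X t := by
    refine le_trans ?_ (log_aux hp prob_le_one (I_gec hX t))
    exact_mod_cast add_le_add (mul_le_mul_of_nonneg_left hx ht.le) (le_refl _)
  calc ((t * x : ℝ) : EReal) - cramer μ X t
      ≤ ((t * x : ℝ) : EReal) - ((t * x + Real.log q : ℝ) : EReal) :=
        EReal.sub_le_sub (le_refl _) h1
    _ = ((-Real.log q : ℝ) : EReal) := by rw [← EReal.coe_sub]; norm_num

lemma lf_top (hX : Measurable X) (hle : ∀ᵐ ω ∂μ, X ω ≤ c) {x : ℝ} (hx : c < x) :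
    LF (cramer μ X) x = ⊤ := by
  rw [EReal.eq_top_iff_forall_lt]
  intro y
  set t : ℝ := (|y| + 1) / (x - c) with hts
  have hxc : 0 < x - c := sub_pos.2 hx
  have ht : 0 < t := div_pos (by positivity) hxc
  have h1 : ((t * x - t * c : ℝ) : EReal) ≤ ((t * x : ℝ) : EReal) - cramer μ X t := by
    rw [EReal.coe_sub]
    exact EReal.sub_le_sub (le_refl _) (cr_le hle ht.le)
  have h2 : (y : EReal) < ((t * x - t * c : ℝ) : EReal) := by
    rw [EReal.coe_lt_coe_iff]
    have : t * x - t * c = |y| + 1 := by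
      rw [← mul_sub, hts, div_mul_cancel₀ _ hxc.ne']
    rw [this]
    exact lt_of_le_of_lt (le_abs_self y) (lt_add_one _)
  exact h2.trans_le (h1.trans (le_iSup₂_of_le t ht (le_refl _)))
lemma exists_M (hX : Measurable X) (x : ℝ) {b : ENNReal} (hb : b < 1) :
    ∃ M : ℝ, M ≤ x ∧ b < μ {ω | M ≤ X ω} := by
  have hmono : Monotone fun n : ℕ => {ω | -(n : ℝ) ≤ X ω} := by
    intro m n hmn ω hω
    simp only [Set.mem_setOf_eq] at hω ⊢
    have : (m:ℝ) ≤ n := Nat.cast_le.2 hmn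
    linarith
  have hU : (⋃ n : ℕ, {ω | -(n : ℝ) ≤ X ω}) = Set.univ := by
    ext ω
    simp only [Set.mem_iUnion, Set.mem_setOf_eq, Set.mem_univ, iff_true]
    obtain ⟨n, hn⟩ := exists_nat_ge (-X ω)
    exact ⟨n, by linarith⟩
  have htend : Tendsto (fun n : ℕ => μ {ω | -(n : ℝ) ≤ X ω}) atTop (nhds 1) := by
    have := tendsto_measure_iUnion_atTop (μ := μ) hmono
    rwa [hU, measure_univ] at this
  have hev : ∀ᶠ n : ℕ in atTop, b < μ {ω | -(n : ℝ) ≤ X ω} :=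
    htend.eventually (eventually_gt_nhds hb)
  obtain ⟨n, hn⟩ := hev.exists
  refine ⟨min (-(n : ℝ)) x, min_le_right _ _, lt_of_lt_of_le hn (measure_mono ?_)⟩
  intro ω hω
  simp only [Set.mem_setOf_eq] at hω ⊢
  exact le_trans (min_le_left _ _) hω

lemma lf_lt_strict (hX : Measurable X) (hle : ∀ᵐ ω ∂μ, X ω ≤ c)
    (hp : μ {ω | X ω = c} ≠ 0) (hp1 : μ {ω | X ω = c} < 1) {x : ℝ} (hx : x < c) :
    LF (cramer μ X) x < ((-Real.log (μ {ω | X ω = c}).toReal : ℝ) : EReal) := by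
  set q := (μ {ω | X ω = c}).toReal with hqdef
  have hq0 : 0 < q := ENNReal.toReal_pos hp (hp1.trans ENNReal.one_lt_top).ne
  have hq1 : q < 1 := by
    rw [hqdef, ← ENNReal.toReal_one]
    exact ENNReal.toReal_strict_mono ENNReal.one_ne_top hp1
  have hlogq : Real.log q < 0 := Real.log_neg hq0 hq1
  set δ : ℝ := (-Real.log q) / 3 with hδdef
  have hδ : 0 < δ := div_pos (by linarith) (by norm_num)
  have hb : ENNReal.ofReal (Real.exp (-δ)) < 1 := by
    rw [← ENNReal.ofReal_one]
    exact (ENNReal.ofReal_lt_ofReal_iff_of_nonneg (Real.exp_pos _).le).2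
      (Real.exp_lt_one_iff.2 (by linarith))
  obtain ⟨M, hMx, hM⟩ := exists_M (μ := μ) hX x hb
  set m := μ {ω | M ≤ X ω} with hmdef
  have hm0 : m ≠ 0 := (lt_of_le_of_lt zero_le hM).ne'
  have hm1 : m ≤ 1 := prob_le_one
  have hmq : -Real.log m.toReal ≤ δ := by
    have : Real.exp (-δ) ≤ m.toReal := by
      rw [← ENNReal.ofReal_le_iff_le_toReal (hm1.trans_lt ENNReal.one_lt_top).ne]
      exact hM.le
    have := Real.log_le_log (Real.exp_pos _) this
    rw [Real.log_exp] at this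
    linarith
  set t₀ : ℝ := δ / (x - M + 1) with ht₀def
  have hxM : 0 ≤ x - M := by linarith
  have ht₀ : 0 < t₀ := div_pos hδ (by linarith)
  have ht₀xM : t₀ * (x - M) ≤ δ := by
    rw [ht₀def, div_mul_eq_mul_div, div_le_iff₀ (by linarith)]
    nlinarith
  set r : ℝ := max (2 * δ) (t₀ * (x - c) - Real.log q) with hrdef
  have hrlt : r < -Real.log q := by
    refine max_lt (by linarith) ?_
    nlinarith [mul_pos ht₀ (sub_pos.2 hx)]
  refine lt_of_le_of_lt (iSup₂_le fun t ht => ?_) (EReal.coe_lt_coe_iff.2 hrlt)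
  rcases le_total t t₀ with h | h
  · -- small t : use M bound
    have h1 : ((t * M + Real.log m.toReal : ℝ) : EReal) ≤ cramer μ X t :=
      log_aux hm0 hm1 (I_geM hX M ht.le)
    calc ((t * x : ℝ) : EReal) - cramer μ X t
        ≤ ((t * x : ℝ) : EReal) - ((t * M + Real.log m.toReal : ℝ) : EReal) :=
          EReal.sub_le_sub (le_refl _) h1
      _ = ((t * x - (t * M + Real.log m.toReal) : ℝ) : EReal) := by
          rw [← EReal.coe_sub]
      _ ≤ (r : EReal) := by
          rw [EReal.coe_le_coe_iff]
          have h2 : t * (x - M) ≤ δ := by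
            calc t * (x - M) ≤ t₀ * (x - M) := mul_le_mul_of_nonneg_right h hxM
              _ ≤ δ := ht₀xM
          have : t * x - (t * M + Real.log m.toReal) ≤ 2 * δ := by nlinarith
          exact this.trans (le_max_left _ _)
  · -- large t : use c bound
    have h1 : ((t * c + Real.log q : ℝ) : EReal) ≤ cramer μ X t :=
      log_aux hp prob_le_one (I_gec hX t)
    calc ((t * x : ℝ) : EReal) - cramer μ X t
        ≤ ((t * x : ℝ) : EReal) - ((t * c + Real.log q : ℝ) : EReal) :=
          EReal.sub_le_sub (le_refl _) h1
      _ = ((t * x - (t * c + Real.log q) : ℝ) : EReal) := by rw [← EReal.coe_sub]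
      _ ≤ (r : EReal) := by
          rw [EReal.coe_le_coe_iff]
          have h2 : t * (x - c) ≤ t₀ * (x - c) :=
            mul_le_mul_of_nonpos_right h (by linarith)
          refine le_trans ?_ (le_max_right _ _)
          nlinarith
lemma J_factor (hX : Measurable X) (t : ℝ) :
    ∫⁻ ω, ENNReal.ofReal (Real.exp (t * X ω)) ∂μ =
      ENNReal.ofReal (Real.exp (t * c)) *
        ∫⁻ ω, ENNReal.ofReal (Real.exp (t * (X ω - c))) ∂μ := by
  rw [← lintegral_const_mul _ (measE (X := fun ω => X ω - c) (hX.sub measurable_const) t)]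
  refine lintegral_congr fun ω => ?_
  rw [← ENNReal.ofReal_mul (Real.exp_pos _).le, ← Real.exp_add]
  ring_nf

lemma J_tendsto (hX : Measurable X) (hle : ∀ᵐ ω ∂μ, X ω ≤ c) :
    Tendsto (fun n : ℕ => ∫⁻ ω, ENNReal.ofReal (Real.exp (((n : ℝ) + 1) * (X ω - c))) ∂μ)
      atTop (nhds (μ {ω | X ω = c})) := by
  have hμs : μ {ω | X ω = c} = ∫⁻ ω, ({ω | X ω = c}).indicator (fun _ => (1 : ENNReal)) ω ∂μ := by
    have hs : MeasurableSet {ω | X ω = c} := hX (measurableSet_singleton c)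
    rw [lintegral_indicator hs _, setLIntegral_one]
  rw [hμs]
  refine tendsto_lintegral_of_dominated_convergence (fun _ => (1 : ENNReal))
    (fun n => measE (X := fun ω => X ω - c) (hX.sub measurable_const) _)
    (fun n => hle.mono fun ω hω => ?_) (by simp) (hle.mono fun ω hω => ?_)
  · calc ENNReal.ofReal (Real.exp (((n : ℝ) + 1) * (X ω - c)))
        ≤ ENNReal.ofReal (Real.exp 0) := by
          refine ENNReal.ofReal_le_ofReal (Real.exp_le_exp.2 ?_)
          have : (0:ℝ) ≤ (n:ℝ) + 1 := by positivity
          nlinarith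
      _ = 1 := by simp
  · rcases eq_or_lt_of_le hω with heq | hlt
    · have hmem : ω ∈ {ω | X ω = c} := heq
      simp only [Set.indicator_of_mem hmem]
      have : ∀ n : ℕ, ENNReal.ofReal (Real.exp (((n : ℝ) + 1) * (X ω - c))) = 1 := by
        intro n; rw [heq]; simp
      simp only [this]
      exact tendsto_const_nhds
    · have hmem : ω ∉ {ω | X ω = c} := fun h => absurd h (ne_of_lt hlt)
      simp only [Set.indicator_of_notMem hmem]
      have h1 : Tendsto (fun n : ℕ => ((n : ℝ) + 1) * (X ω - c)) atTop atBot := by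
        refine Tendsto.atTop_mul_const_of_neg (sub_neg.2 hlt) ?_
        exact tendsto_atTop_add_const_right _ 1 tendsto_natCast_atTop_atTop
      have h2 : Tendsto (fun n : ℕ => Real.exp (((n : ℝ) + 1) * (X ω - c))) atTop (nhds 0) :=
        Real.tendsto_exp_atBot.comp h1
      have := ENNReal.tendsto_ofReal h2
      rwa [ENNReal.ofReal_zero] at this

lemma J_mem (hX : Measurable X) (hle : ∀ᵐ ω ∂μ, X ω ≤ c) {t : ℝ} (ht : 0 ≤ t) :
    μ {ω | X ω = c} ≤ ∫⁻ ω, ENNReal.ofReal (Real.exp (t * (X ω - c))) ∂μ ∧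
      ∫⁻ ω, ENNReal.ofReal (Real.exp (t * (X ω - c))) ∂μ ≤ 1 := by
  constructor
  · have := I_gec (c := (0:ℝ)) (μ := μ) (X := fun ω => X ω - c) (hX.sub measurable_const) t
    simp only [mul_zero, Real.exp_zero, ENNReal.ofReal_one, one_mul] at this
    refine le_trans (le_of_eq ?_) this
    congr 1
    ext ω
    simp [sub_eq_zero]
  · calc ∫⁻ ω, ENNReal.ofReal (Real.exp (t * (X ω - c))) ∂μ
        ≤ ∫⁻ _, 1 ∂μ := by
          refine lintegral_mono_ae (hle.mono fun ω hω => ?_)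
          calc ENNReal.ofReal (Real.exp (t * (X ω - c)))
              ≤ ENNReal.ofReal (Real.exp 0) := by
                refine ENNReal.ofReal_le_ofReal (Real.exp_le_exp.2 ?_)
                nlinarith
            _ = 1 := by simp
      _ = 1 := by simp

lemma lf_c_ge (hX : Measurable X) (hle : ∀ᵐ ω ∂μ, X ω ≤ c)
    (hp : μ {ω | X ω = c} ≠ 0) :
    ((-Real.log (μ {ω | X ω = c}).toReal : ℝ) : EReal) ≤ LF (cramer μ X) c := by
  set p := μ {ω | X ω = c} with hpdef
  have hpt : p ≠ ⊤ := (prob_le_one.trans_lt ENNReal.one_lt_top).ne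
  set q := p.toReal with hqdef
  have hq0 : 0 < q := ENNReal.toReal_pos hp hpt
  by_contra hcon
  push_neg at hcon
  obtain ⟨y, hy1, hy2⟩ := EReal.exists_between_coe_real hcon
  have hylt : y < -Real.log q := EReal.coe_lt_coe_iff.1 hy2
  have hqe : q < Real.exp (-y) := by
    have := Real.log_lt_iff_lt_exp hq0 |>.1 (by linarith : Real.log q < -y)
    exact this
  have hplt : p < ENNReal.ofReal (Real.exp (-y)) :=
    (ENNReal.lt_ofReal_iff_toReal_lt hpt).2 hqe
  obtain ⟨n, hn⟩ := ((J_tendsto hX hle).eventually (eventually_lt_nhds hplt)).exists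
  set t : ℝ := (n : ℝ) + 1 with htdef
  have ht : 0 < t := by positivity
  set J := ∫⁻ ω, ENNReal.ofReal (Real.exp (t * (X ω - c))) ∂μ with hJdef
  obtain ⟨hJp, hJ1⟩ := J_mem hX hle ht.le
  have hJ0 : J ≠ 0 := fun h => hp (le_antisymm (h ▸ hJp) zero_le)
  have hJt : J ≠ ⊤ := (hJ1.trans_lt ENNReal.one_lt_top).ne
  have hJtr : (0:ℝ) < J.toReal := ENNReal.toReal_pos hJ0 hJt
  have hJlt : Real.log J.toReal < -y := by
    have h1 : J.toReal < Real.exp (-y) := ENNReal.toReal_lt_of_lt_ofReal hn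
    calc Real.log J.toReal < Real.log (Real.exp (-y)) := Real.log_lt_log hJtr h1
      _ = -y := Real.log_exp _
  have hcr : cramer μ X t = ((t * c + Real.log J.toReal : ℝ) : EReal) := by
    rw [cramer, J_factor hX t, ENNReal.log_mul_add,
      ENNReal.log_ofReal_of_pos (Real.exp_pos _), Real.log_exp,
      ENNReal.log_pos_real' hJtr, EReal.coe_add]
  have hterm : (y : EReal) < ((t * c : ℝ) : EReal) - cramer μ X t := by
    rw [hcr, ← EReal.coe_sub, EReal.coe_lt_coe_iff]
    have : t * c - (t * c + Real.log J.toReal) = -Real.log J.toReal := by ring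
    rw [this]
    linarith
  have : (y : EReal) < LF (cramer μ X) c :=
    hterm.trans_le (le_iSup₂_of_le t ht (le_refl _))
  exact absurd (hy1.trans this) (lt_irrefl _)
lemma sInf_image_Ioi (c : ℝ) :
    sInf ((fun x : ℝ => (x : EReal)) '' Set.Ioi c) = (c : EReal) := by
  refine le_antisymm ?_ (le_sInf ?_)
  · rw [← EReal.le_of_forall_lt_iff_le]
    intro z hz
    exact sInf_le ⟨z, EReal.coe_lt_coe_iff.1 hz, rfl⟩
  · rintro _ ⟨x, hx, rfl⟩
    exact EReal.coe_le_coe_iff.2 (le_of_lt hx)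

lemma sInf_image_Ici (c : ℝ) :
    sInf ((fun x : ℝ => (x : EReal)) '' Set.Ici c) = (c : EReal) := by
  refine le_antisymm (sInf_le ⟨c, le_refl c, rfl⟩) (le_sInf ?_)
  rintro _ ⟨x, hx, rfl⟩
  exact EReal.coe_le_coe_iff.2 hx

lemma sInf_image_univ :
    sInf ((fun x : ℝ => (x : EReal)) '' Set.univ) = (⊥ : EReal) := by
  rw [EReal.eq_bot_iff_forall_lt]
  intro y
  exact lt_of_le_of_lt (sInf_le ⟨y - 1, trivial, rfl⟩) (EReal.coe_lt_coe_iff.2 (by linarith))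

lemma cramer_eq_of_ae (hae : ∀ᵐ ω ∂μ, X ω = c) (t : ℝ) :
    cramer μ X t = ((t * c : ℝ) : EReal) := by
  have h1 : ∫⁻ ω, ENNReal.ofReal (Real.exp (t * X ω)) ∂μ =
      ENNReal.ofReal (Real.exp (t * c)) := by
    rw [lintegral_congr_ae (hae.mono fun ω hω => by rw [hω])]
    simp
  rw [cramer, h1, ENNReal.log_ofReal_of_pos (Real.exp_pos _), Real.log_exp]

lemma lf_nonneg_of_ae (hae : ∀ᵐ ω ∂μ, X ω = c) (x : ℝ) :
    (0 : EReal) ≤ LF (cramer μ X) x := by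
  refine le_of_forall_lt fun e he => ?_
  obtain ⟨y, hy1, hy2⟩ := EReal.exists_between_coe_real he
  have hy0 : y < 0 := by exact_mod_cast hy2
  have term : ∀ t : ℝ, 0 < t →
      ((t * x : ℝ) : EReal) - cramer μ X t = ((t * (x - c) : ℝ) : EReal) := by
    intro t ht
    rw [cramer_eq_of_ae hae, ← EReal.coe_sub]
    norm_num [mul_sub]
  rcases le_or_gt c x with hcx | hcx
  · have h1 : (y : EReal) < ((1 * (x - c) : ℝ) : EReal) := by
      rw [EReal.coe_lt_coe_iff]; nlinarith
    refine lt_of_le_of_lt hy1.le (h1.trans_le ?_)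
    rw [← term 1 one_pos]
    exact le_iSup₂_of_le 1 one_pos (le_refl _)
  · set t : ℝ := y / (2 * (x - c)) with htdef
    have hxc : x - c < 0 := by linarith
    have ht : 0 < t := div_pos_of_neg_of_neg hy0 (by linarith)
    have hval : t * (x - c) = y / 2 := by
      have h2 : x - c ≠ 0 := ne_of_lt hxc
      rw [htdef, div_mul_eq_mul_div, mul_comm (2:ℝ) (x - c), mul_comm y (x - c),
        mul_div_mul_left _ _ h2]
    have h1 : (y : EReal) < ((t * (x - c) : ℝ) : EReal) := by
      rw [EReal.coe_lt_coe_iff, hval]; linarith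
    refine lt_of_le_of_lt hy1.le (h1.trans_le ?_)
    rw [← term t ht]
    exact le_iSup₂_of_le t ht (le_refl _)

end Aux

/-- Lemma, third part. Suppose `x_max = ess sup X = c < ∞` and
`p_max = P(X = c) > 0`. Then `L_X^{*←}(u) = c` for `u > -ln p_max`;
`L_X^{*←}(-ln p_max) = c` if `p_max < 1`; and `L_X^{*←}(-ln p_max) = L_X^{*←}(0) = -∞`
if `p_max = 1`. -/
theorem geInv_cramer_at_top_values (Ω : Type*) [MeasurableSpace Ω] (μ : Measure Ω)
    [IsProbabilityMeasure μ] (X : Ω → ℝ) (hX : Measurable X)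
    (hfin : ∃ t : ℝ, 0 < t ∧ ∫⁻ ω, ENNReal.ofReal (Real.exp (t * X ω)) ∂μ ≠ ⊤)
    (c : ℝ) (hc : essSup (fun ω => (X ω : EReal)) μ = (c : EReal))
    (hp : 0 < μ {ω | X ω = c}) :
    (∀ u : ℝ, -(ENNReal.log (μ {ω | X ω = c})) < (u : EReal) →
        geInv (cramer μ X) u = (c : EReal)) ∧
      (∀ u : ℝ, (u : EReal) = -(ENNReal.log (μ {ω | X ω = c})) →
        μ {ω | X ω = c} < 1 → geInv (cramer μ X) u = (c : EReal)) ∧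
      (μ {ω | X ω = c} = 1 → geInv (cramer μ X) 0 = ⊥) := by
  have hle : ∀ᵐ ω ∂μ, X ω ≤ c := by
    have h1 : ∀ᵐ ω ∂μ, (X ω : EReal) ≤ essSup (fun ω => (X ω : EReal)) μ := ae_le_essSup
    rw [hc] at h1
    exact h1.mono fun ω hω => EReal.coe_le_coe_iff.1 hω
  set p := μ {ω | X ω = c} with hpdef
  have hp0 : p ≠ 0 := hp.ne'
  have hpt : p ≠ ⊤ := (prob_le_one.trans_lt ENNReal.one_lt_top).ne
  set q := p.toReal with hqdef
  have hq0 : 0 < q := ENNReal.toReal_pos hp0 hpt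
  have hlog : -(ENNReal.log p) = ((-Real.log q : ℝ) : EReal) := by
    rw [ENNReal.log_pos_real' hq0, EReal.coe_neg]
  refine ⟨fun u hu => ?_, fun u hu hp1 => ?_, fun h1 => ?_⟩
  · rw [hlog, EReal.coe_lt_coe_iff] at hu
    have hS : {x : ℝ | (u : EReal) ≤ LF (cramer μ X) x} = Set.Ioi c := by
      ext x
      simp only [Set.mem_setOf_eq, Set.mem_Ioi]
      constructor
      · intro hx
        by_contra hcx
        push_neg at hcx
        have := (hx.trans (lf_le_of_le hX hp0 hcx)).trans_lt
          (EReal.coe_lt_coe_iff.2 hu)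
        exact absurd this (lt_irrefl _)
      · intro hcx
        rw [lf_top hX hle hcx]
        exact le_top
    rw [geInv, hS, sInf_image_Ioi]
  · rw [hlog] at hu
    have hu' : u = -Real.log q := EReal.coe_eq_coe_iff.1 hu
    have hS : {x : ℝ | (u : EReal) ≤ LF (cramer μ X) x} = Set.Ici c := by
      ext x
      simp only [Set.mem_setOf_eq, Set.mem_Ici]
      constructor
      · intro hx
        by_contra hcx
        push_neg at hcx
        have h2 := hx.trans_lt (lf_lt_strict hX hle hp0 hp1 hcx)
        rw [hu'] at h2
        exact absurd h2 (lt_irrefl _)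
      · intro hcx
        rcases eq_or_lt_of_le hcx with heq | hlt
        · rw [← heq, hu]
          exact lf_c_ge hX hle hp0
        · rw [lf_top hX hle hlt]
          exact le_top
    rw [geInv, hS, sInf_image_Ici]
  · have hae : ∀ᵐ ω ∂μ, X ω = c := by
      have hs : MeasurableSet {ω | X ω = c} := hX (measurableSet_singleton c)
      have : μ {ω | X ω = c}ᶜ = 0 := by
        rw [measure_compl hs (by rw [← hpdef]; exact hpt), measure_univ, ← hpdef, h1,
          tsub_self]
      exact this
    have hS : {x : ℝ | ((0 : ℝ) : EReal) ≤ LF (cramer μ X) x} = Set.univ := by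
      ext x
      simp only [Set.mem_setOf_eq, Set.mem_univ, iff_true, EReal.coe_zero]
      exact lf_nonneg_of_ae hae x
    rw [geInv, hS, sInf_image_univ]
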